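/- In the Pontryagin setting ẏ = f(y, λ, t), if additionally the optimality condition ∂g/∂λ − p · (∂f/∂λ) = 0 holds along the trajectory, then the first variation δJ of the cost vanishes for every admissible variation δλ (with δy solving the linearized equation with δy(0)=0). -/

import Mathlib

open MeasureTheory

/-- If additionally the Pontryagin optimality condition `∂g/∂λ − p·(∂f/∂λ) = 0`
holds along the trajectory, then the first variation `δJ` of the cost vanishes
for every admissible variation. -/
theorem pontryagin_optimality_stationary {d m : ℕ} (T : ℝ) (hT : 0 < T)
    (f : (Fin d → ℝ) → (Fin m → ℝ) → ℝ → Fin d → ℝ)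
    (g : (Fin d → ℝ) → (Fin m → ℝ) → ℝ → ℝ)
    (hf : ContDiff ℝ 1 fun z : (Fin d → ℝ) × (Fin m → ℝ) × ℝ => f z.1 z.2.1 z.2.2)
    (hg : ContDiff ℝ 1 fun z : (Fin d → ℝ) × (Fin m → ℝ) × ℝ => g z.1 z.2.1 z.2.2)
    (x : Fin d → ℝ)
    (y δy : ℝ → Fin d → ℝ) (lam δlam : ℝ → Fin m → ℝ) (p : ℝ → Fin d → ℝ)
    (hy : ContDiff ℝ 1 y) (hδy : ContDiff ℝ 1 δy) (hlam : ContDiff ℝ 1 lam)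
    (hδlam : ContDiff ℝ 1 δlam) (hp : ContDiff ℝ 1 p)
    -- state equation
    (hstate : ∀ t i, deriv (fun τ => y τ i) t = f (y t) (lam t) t i)
    (hinit : y 0 = x)
    -- adjoint equation and final condition
    (hadj : ∀ t i, deriv (fun τ => p τ i) t
        + ∑ j, p t j * fderiv ℝ (fun y' => f y' (lam t) t j) (y t) (Pi.single i 1)
        - fderiv ℝ (fun y' => g y' (lam t) t) (y t) (Pi.single i 1) = 0)
    (hfinal : p T = 0)
    -- linearized constraint
    (hlin : ∀ t i, deriv (fun τ => δy τ i) t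
        = (∑ j, fderiv ℝ (fun y' => f y' (lam t) t i) (y t) (Pi.single j 1) * δy t j)
        + ∑ j, fderiv ℝ (fun l' => f (y t) l' t i) (lam t) (Pi.single j 1) * δlam t j)
    (hlin0 : δy 0 = 0)
    -- Pontryagin optimality condition along the trajectory
    (hopt : ∀ t j, fderiv ℝ (fun l' => g (y t) l' t) (lam t) (Pi.single j 1)
        - ∑ i, p t i * fderiv ℝ (fun l' => f (y t) l' t i) (lam t) (Pi.single j 1) = 0) :
    (∫ t in (0:ℝ)..T,
      ((∑ i, fderiv ℝ (fun y' => g y' (lam t) t) (y t) (Pi.single i 1) * δy t i)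
       + ∑ j, fderiv ℝ (fun l' => g (y t) l' t) (lam t) (Pi.single j 1) * δlam t j))
    = 0 := by
  classical
  set F : ℝ → ℝ := fun t => ∑ i, p t i * δy t i with hFdef
  have hpc : ∀ i, ContDiff ℝ 1 fun t => p t i := fun i => (contDiff_pi.mp hp) i
  have hyc : ∀ i, ContDiff ℝ 1 fun t => δy t i := fun i => (contDiff_pi.mp hδy) i
  have hFc : ContDiff ℝ 1 F := ContDiff.sum fun i _ => (hpc i).mul (hyc i)
  have hderiv : ∀ t, HasDerivAt F
      (∑ i, (deriv (fun τ => p τ i) t * δy t i + p t i * deriv (fun τ => δy τ i) t)) t := by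
    intro t
    exact HasDerivAt.fun_sum fun i _ =>
      (((hpc i).differentiable one_ne_zero t).hasDerivAt.mul
        (((hyc i).differentiable one_ne_zero) t).hasDerivAt)
  have hkey : ∀ t,
      ((∑ i, fderiv ℝ (fun y' => g y' (lam t) t) (y t) (Pi.single i 1) * δy t i)
       + ∑ j, fderiv ℝ (fun l' => g (y t) l' t) (lam t) (Pi.single j 1) * δlam t j)
      = deriv F t := by
    intro t
    rw [(hderiv t).deriv]
    have hp' : ∀ i, deriv (fun τ => p τ i) t
        = fderiv ℝ (fun y' => g y' (lam t) t) (y t) (Pi.single i 1)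
          - ∑ j, p t j * fderiv ℝ (fun y' => f y' (lam t) t j) (y t) (Pi.single i 1) := by
      intro i; have h := hadj t i; linarith
    have hH : ∀ j, fderiv ℝ (fun l' => g (y t) l' t) (lam t) (Pi.single j 1)
        = ∑ i, p t i * fderiv ℝ (fun l' => f (y t) l' t i) (lam t) (Pi.single j 1) := by
      intro j; have h := hopt t j; linarith
    simp only [hp', hlin, hH]
    simp only [sub_mul, mul_add, Finset.mul_sum, Finset.sum_add_distrib,
      Finset.sum_sub_distrib, Finset.sum_mul]
    have c1 : ∑ i : Fin d, ∑ j : Fin d,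
        p t j * fderiv ℝ (fun y' => f y' (lam t) t j) (y t) (Pi.single i 1) * δy t i
        = ∑ j : Fin d, ∑ i : Fin d,
        p t j * fderiv ℝ (fun y' => f y' (lam t) t j) (y t) (Pi.single i 1) * δy t i :=
      Finset.sum_comm
    have c2 : ∑ j : Fin m, ∑ i : Fin d,
        p t i * fderiv ℝ (fun l' => f (y t) l' t i) (lam t) (Pi.single j 1) * δlam t j
        = ∑ i : Fin d, ∑ j : Fin m,
        p t i * fderiv ℝ (fun l' => f (y t) l' t i) (lam t) (Pi.single j 1) * δlam t j :=
      Finset.sum_comm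
    rw [c1, c2]
    ring_nf
  have hcongr : (∫ t in (0:ℝ)..T,
      ((∑ i, fderiv ℝ (fun y' => g y' (lam t) t) (y t) (Pi.single i 1) * δy t i)
       + ∑ j, fderiv ℝ (fun l' => g (y t) l' t) (lam t) (Pi.single j 1) * δlam t j))
      = ∫ t in (0:ℝ)..T, deriv F t :=
    intervalIntegral.integral_congr fun t _ => hkey t
  rw [hcongr, intervalIntegral.integral_deriv_eq_sub
    (fun t _ => hFc.differentiable one_ne_zero t)
    ((hFc.continuous_deriv le_rfl).intervalIntegrable 0 T)]
  simp [hFdef, hfinal, hlin0]
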